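/- Let r = Σ_i u_i ⊗ v_i be a solution of the associative Yang-Baxter equation of weight λ in a unital algebra R, i.e., r_13 r_12 − r_12 r_23 + r_23 r_13 = −λ r_13. Then the operator P_r(x) := Σ_i u_i x v_i is a Rota-Baxter operator of weight λ on R: P_r(x)P_r(y) = P_r(xP_r(y)) + P_r(P_r(x)y) + λ P_r(xy). -/

import Mathlib

open TensorProduct

/-- A solution of the associative Yang-Baxter equation of weight `λ` induces a
Rota-Baxter operator of weight `λ` via `P_r(x) = Σ_i u_i x v_i`. -/
theorem RB_of_AYBE {k R : Type*} [CommRing k] [Ring R] [Algebra k R]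
    {ι : Type*} [Fintype ι]
    (u v : ι → R) (lam : k)
    (r12 r13 r23 : R ⊗[k] (R ⊗[k] R))
    (h12 : r12 = ∑ i, u i ⊗ₜ[k] (v i ⊗ₜ[k] (1 : R)))
    (h13 : r13 = ∑ i, u i ⊗ₜ[k] ((1 : R) ⊗ₜ[k] v i))
    (h23 : r23 = ∑ i, (1 : R) ⊗ₜ[k] (u i ⊗ₜ[k] v i))
    (hYB : r13 * r12 - r12 * r23 + r23 * r13 = -(lam • r13))
    (P : R → R)
    (hP : ∀ x : R, P x = ∑ i, u i * x * v i) :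
    ∀ x y : R, P x * P y = P (x * P y) + P (P x * y) + lam • P (x * y) := by
  intro x y
  -- trilinear map (a, b, c) ↦ a * x * b * y * c
  let g : R →ₗ[k] R →ₗ[k] R →ₗ[k] R :=
    LinearMap.mk₂ k (fun a b => LinearMap.mulLeft k (a * x * b * y))
      (by intro a a' b; ext c; simp [add_mul, mul_assoc])
      (by intro c a b; ext d; simp [smul_mul_assoc, mul_assoc])
      (by intro a b b'; ext c; simp [mul_add, add_mul, mul_assoc])
      (by intro c a b; ext d; simp [mul_smul_comm, smul_mul_assoc, mul_assoc])
  let L : R ⊗[k] (R ⊗[k] R) →ₗ[k] R :=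
    TensorProduct.lift ((TensorProduct.lift.equiv (RingHom.id k) R R R).toLinearMap.comp g)
  have hL : ∀ a b c : R, L (a ⊗ₜ[k] (b ⊗ₜ[k] c)) = a * x * b * y * c := by
    intro a b c; simp [L, g, mul_assoc]
  have key := congrArg L hYB
  simp only [map_add, map_sub, map_neg, map_smul] at key
  have h1 : L (r13 * r12) = P (P x * y) := by
    rw [h13, h12, Finset.sum_mul_sum]
    simp only [Algebra.TensorProduct.tmul_mul_tmul, one_mul, mul_one, map_sum, hL]
    simp only [hP, Finset.sum_mul, Finset.mul_sum]
    exact Finset.sum_congr rfl fun i _ => Finset.sum_congr rfl fun j _ => by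
      simp only [mul_assoc]
  have h2 : L (r12 * r23) = P x * P y := by
    rw [h12, h23, Finset.sum_mul_sum]
    simp only [Algebra.TensorProduct.tmul_mul_tmul, one_mul, mul_one, map_sum, hL]
    simp only [hP, Finset.sum_mul, Finset.mul_sum]
    rw [Finset.sum_comm]
    exact Finset.sum_congr rfl fun i _ => Finset.sum_congr rfl fun j _ => by
      simp only [mul_assoc]
  have h3 : L (r23 * r13) = P (x * P y) := by
    rw [h23, h13, Finset.sum_mul_sum]
    simp only [Algebra.TensorProduct.tmul_mul_tmul, one_mul, mul_one, map_sum, hL]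
    simp only [hP, Finset.sum_mul, Finset.mul_sum]
    rw [Finset.sum_comm]
    exact Finset.sum_congr rfl fun i _ => Finset.sum_congr rfl fun j _ => by
      simp only [mul_assoc]
  have h4 : L r13 = P (x * y) := by
    rw [h13]
    simp only [map_sum, hL, mul_one, hP]
    refine Finset.sum_congr rfl fun i _ => ?_
    simp only [mul_assoc]
  rw [h1, h2, h3, h4] at key
  linear_combination (norm := module) -key
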